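/- Let σ ≥ 0, x* > 0, B > 0, θ* ∈ [0,1), and set x₂ = θ*·x* + 2/(r−μ); assume x₂ < x*. For x ∈ (x₂, x*) define p₂(x) = x₂/x and V₂(x) = (1 − x₂/x)·B. Then for every x ∈ (x₂, x*): (a) for every ξ ≥ 0, (r+λ)·(1 − p₂(x)) + H_ξ(x, ξ, p₂(x))·p₂'(x) + (σ²x²/2)·p₂''(x) ≤ 0; and (b) for every q ∈ (0, p₂(x)], −r·V₂(x) + H(x, V₂'(x), q) + (σ²x²/2)·V₂''(x) ≥ 0. -/

import Mathlib

open Set Filter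

/-- The Hamiltonian `H(x,ξ,p) = inf_{ω ∈ [0,1)} { L(ω) − (ξ/p)·ω } + ((λ+r)/p − λ + σ² − μ)·x·ξ`. -/
noncomputable def Ham (L : ℝ → ℝ) (lam r mu sig x ξ p : ℝ) : ℝ :=
  sInf ((fun ω => L ω - ξ / p * ω) '' Set.Ico 0 1) +
    ((lam + r) / p - lam + sig ^ 2 - mu) * x * ξ

/-- The partial derivative `H_ξ` of the Hamiltonian in its second argument. -/
noncomputable def Hxi (L : ℝ → ℝ) (lam r mu sig x ξ p : ℝ) : ℝ :=
  deriv (fun ξ' => Ham L lam r mu sig x ξ' p) ξ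

noncomputable def Mfun (L : ℝ → ℝ) (c : ℝ) : ℝ :=
  sInf ((fun ω => L ω - c * ω) '' Set.Ico 0 1)

lemma min_exists {L : ℝ → ℝ} (hcont : ContinuousOn L (Set.Ico 0 1)) (hL0 : L 0 = 0)
    (hLtop : Filter.Tendsto L (nhdsWithin 1 (Set.Iio 1)) Filter.atTop) (c : ℝ) :
    ∃ t ∈ Set.Ico (0:ℝ) 1, ∀ c' ∈ Set.Icc (c-1) (c+1),
      ∃ ω₀ ∈ Set.Icc (0:ℝ) t, IsMinOn (fun ω => L ω - c' * ω) (Set.Ico 0 1) ω₀ := by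
  have h := hLtop.eventually (eventually_ge_atTop (|c| + 2))
  rw [eventually_nhdsWithin_iff] at h
  obtain ⟨δ, hδ, hδ'⟩ := Metric.eventually_nhds_iff.mp h
  set t : ℝ := max 0 (1 - δ/2) with ht_def
  have ht0 : 0 ≤ t := le_max_left _ _
  have ht1 : t < 1 := by
    apply max_lt one_pos
    linarith
  have key : ∀ ω : ℝ, t < ω → ω < 1 → |c| + 2 ≤ L ω := by
    intro ω h1 h2
    apply hδ' _ h2
    rw [Real.dist_eq, abs_of_nonpos (by linarith)]
    have : 1 - δ/2 ≤ t := le_max_right _ _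
    linarith
  refine ⟨t, ⟨ht0, ht1⟩, fun c' hc' => ?_⟩
  have hIcc : Set.Icc (0:ℝ) t ⊆ Set.Ico 0 1 := fun v hv => ⟨hv.1, lt_of_le_of_lt hv.2 ht1⟩
  have hfc : ContinuousOn (fun ω => L ω - c' * ω) (Set.Icc 0 t) :=
    (hcont.mono hIcc).sub (continuous_const.mul continuous_id).continuousOn
  obtain ⟨ω₀, hω₀mem, hmin⟩ := isCompact_Icc.exists_isMinOn ⟨0, by simp [ht0]⟩ hfc
  refine ⟨ω₀, hω₀mem, fun ω hω => ?_⟩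
  rcases le_or_gt ω t with hle | hlt
  · exact hmin ⟨hω.1, hle⟩
  · have hc'abs : |c'| ≤ |c| + 1 := by
      rw [abs_le]
      constructor <;> [skip; skip] <;>
      · have := hc'.1; have := hc'.2
        have := neg_abs_le c; have := le_abs_self c
        linarith
    have hLω := key ω hlt hω.2
    have h0 : (fun ω => L ω - c' * ω) ω₀ ≤ (fun ω => L ω - c' * ω) 0 := hmin ⟨le_refl _, ht0⟩
    simp only [hL0, mul_zero, sub_zero] at h0
    have : c' * ω ≤ |c| + 1 := by
      calc c' * ω ≤ |c'| * |ω| := by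
            have := le_abs_self (c' * ω); rwa [abs_mul] at this
        _ ≤ (|c| + 1) * 1 := by
            apply mul_le_mul hc'abs _ (abs_nonneg _) (by positivity)
            rw [abs_of_nonneg hω.1]
            exact le_of_lt hω.2
        _ = |c| + 1 := mul_one _
    show L ω₀ - c' * ω₀ ≤ L ω - c' * ω
    linarith

lemma min_exists' {L : ℝ → ℝ} (hcont : ContinuousOn L (Set.Ico 0 1)) (hL0 : L 0 = 0)
    (hLtop : Filter.Tendsto L (nhdsWithin 1 (Set.Iio 1)) Filter.atTop) (c : ℝ) :
    ∃ ω₀ ∈ Set.Ico (0:ℝ) 1, IsMinOn (fun ω => L ω - c * ω) (Set.Ico 0 1) ω₀ := by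
  obtain ⟨t, ht, hall⟩ := min_exists hcont hL0 hLtop c
  obtain ⟨ω₀, hω₀, hmin⟩ := hall c ⟨by linarith, by linarith⟩
  exact ⟨ω₀, ⟨hω₀.1, lt_of_le_of_lt hω₀.2 ht.2⟩, hmin⟩

lemma Mfun_eq {L : ℝ → ℝ} {c ω₀ : ℝ} (hω₀ : ω₀ ∈ Set.Ico (0:ℝ) 1)
    (hmin : IsMinOn (fun ω => L ω - c * ω) (Set.Ico 0 1) ω₀) :
    Mfun L c = L ω₀ - c * ω₀ := by
  apply IsLeast.csInf_eq
  constructor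
  · exact ⟨ω₀, hω₀, rfl⟩
  · rintro b ⟨ω, hω, rfl⟩
    exact hmin hω

lemma strictConvex_fc {L : ℝ → ℝ} (hconv : StrictConvexOn ℝ (Set.Ico 0 1) L) (c : ℝ) :
    StrictConvexOn ℝ (Set.Ico 0 1) (fun ω => L ω - c * ω) := by
  have hg : ConvexOn ℝ (Set.Ico (0:ℝ) 1) (fun ω => -(c * ω)) := by
    refine ⟨convex_Ico 0 1, fun u _ v _ a b _ _ _ => ?_⟩
    simp only [smul_eq_mul]
    apply le_of_eq; ring
  have h := hconv.add_convexOn hg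
  have heq : (L + fun ω => -(c * ω)) = fun ω => L ω - c * ω := by
    ext ω; simp [sub_eq_add_neg]
  rwa [heq] at h

lemma min_unique {L : ℝ → ℝ} (hconv : StrictConvexOn ℝ (Set.Ico 0 1) L) {c ω₀ ω₁ : ℝ}
    (hω₀ : ω₀ ∈ Set.Ico (0:ℝ) 1) (hω₁ : ω₁ ∈ Set.Ico (0:ℝ) 1)
    (hmin₀ : IsMinOn (fun ω => L ω - c * ω) (Set.Ico 0 1) ω₀)
    (hmin₁ : IsMinOn (fun ω => L ω - c * ω) (Set.Ico 0 1) ω₁) : ω₀ = ω₁ :=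
  (strictConvex_fc hconv c).eq_of_isMinOn hmin₀ hmin₁ hω₀ hω₁

lemma hasDerivAt_Mfun {L : ℝ → ℝ} (hcont : ContinuousOn L (Set.Ico 0 1)) (hL0 : L 0 = 0)
    (hLtop : Filter.Tendsto L (nhdsWithin 1 (Set.Iio 1)) Filter.atTop)
    (hconv : StrictConvexOn ℝ (Set.Ico 0 1) L) {c ω₀ : ℝ}
    (hω₀ : ω₀ ∈ Set.Ico (0:ℝ) 1)
    (hmin : IsMinOn (fun ω => L ω - c * ω) (Set.Ico 0 1) ω₀) :
    HasDerivAt (Mfun L) (-ω₀) c := by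
  have hsel : ∀ c' : ℝ, ∃ ω ∈ Set.Ico (0:ℝ) 1,
      IsMinOn (fun u => L u - c' * u) (Set.Ico 0 1) ω := min_exists' hcont hL0 hLtop
  choose W hWmem hWmin using hsel
  have hWc : W c = ω₀ := min_unique hconv (hWmem c) hω₀ (hWmin c) hmin
  have bound : ∀ c' : ℝ, |Mfun L c' - Mfun L c + (c' - c) * ω₀| ≤ |c' - c| * |W c' - ω₀| := by
    intro c'
    have e1 : Mfun L c' = L (W c') - c' * W c' := Mfun_eq (hWmem c') (hWmin c')
    have e2 : Mfun L c = L ω₀ - c * ω₀ := Mfun_eq hω₀ hmin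
    have i1 : L (W c') - c' * W c' ≤ L ω₀ - c' * ω₀ := hWmin c' hω₀
    have i2 : L ω₀ - c * ω₀ ≤ L (W c') - c * W c' := hmin (hWmem c')
    have h1 : (c' - c) * (W c' - ω₀) ≤ |c' - c| * |W c' - ω₀| := by
      rw [← abs_mul]; exact le_abs_self _
    rw [abs_le]
    constructor
    · nlinarith [mul_nonneg (abs_nonneg (c' - c)) (abs_nonneg (W c' - ω₀))]
    · nlinarith [mul_nonneg (abs_nonneg (c' - c)) (abs_nonneg (W c' - ω₀))]
  have cont : Tendsto W (nhds c) (nhds ω₀) := by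
    rw [Metric.tendsto_nhds]
    intro ε hε
    obtain ⟨t, ht, hall⟩ := min_exists hcont hL0 hLtop c
    have hWt : ∀ c' ∈ Set.Icc (c-1) (c+1), W c' ∈ Set.Icc 0 t := by
      intro c' hc'
      obtain ⟨ω₁, hω₁, hmin₁⟩ := hall c' hc'
      have heq : W c' = ω₁ :=
        min_unique hconv (hWmem c') ⟨hω₁.1, lt_of_le_of_lt hω₁.2 ht.2⟩ (hWmin c') hmin₁
      rw [heq]; exact hω₁
    have hω₀t : ω₀ ∈ Set.Icc 0 t := by
      rw [← hWc]; exact hWt c ⟨by linarith, by linarith⟩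
    by_cases hKne : ({v | v ∈ Set.Icc (0:ℝ) t ∧ ε ≤ |v - ω₀|}).Nonempty
    · have hKcomp : IsCompact {v | v ∈ Set.Icc (0:ℝ) t ∧ ε ≤ |v - ω₀|} := by
        have hKeq : {v | v ∈ Set.Icc (0:ℝ) t ∧ ε ≤ |v - ω₀|}
            = Set.Icc (0:ℝ) t ∩ {v | ε ≤ |v - ω₀|} := rfl
        rw [hKeq]
        exact isCompact_Icc.inter_right
          (isClosed_le continuous_const ((continuous_id.sub continuous_const).abs))
      have hKsub : {v | v ∈ Set.Icc (0:ℝ) t ∧ ε ≤ |v - ω₀|} ⊆ Set.Ico (0:ℝ) 1 :=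
        fun v hv => ⟨hv.1.1, lt_of_le_of_lt hv.1.2 ht.2⟩
      obtain ⟨v₀, hv₀K, hv₀min⟩ := hKcomp.exists_isMinOn hKne
        ((hcont.mono hKsub).sub (continuous_const.mul continuous_id).continuousOn)
      have hv₀Ico : v₀ ∈ Set.Ico (0:ℝ) 1 := hKsub hv₀K
      have hγbase : L ω₀ - c * ω₀ ≤ L v₀ - c * v₀ := hmin hv₀Ico
      have hγpos : 0 < (L v₀ - c * v₀) - (L ω₀ - c * ω₀) := by
        rcases lt_or_eq_of_le hγbase with h | h
        · linarith
        · exfalso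
          have hv₀min' : IsMinOn (fun ω => L ω - c * ω) (Set.Ico 0 1) v₀ := by
            intro u hu
            have h2 := hmin hu
            simp only [Set.mem_setOf_eq] at h2 ⊢
            linarith
          have := min_unique hconv hω₀ hv₀Ico hmin hv₀min'
          have h3 := hv₀K.2
          rw [← this] at h3
          simp at h3
          linarith
    -- set γ
      set γ := (L v₀ - c * v₀) - (L ω₀ - c * ω₀) with hγdef
      rw [Metric.eventually_nhds_iff]
      refine ⟨min 1 (γ/3), by positivity, fun c' hc'dist => ?_⟩
      rw [Real.dist_eq] at hc'dist
      have hd1 : |c' - c| < 1 := lt_of_lt_of_le hc'dist (min_le_left _ _)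
      have hd2 : |c' - c| < γ/3 := lt_of_lt_of_le hc'dist (min_le_right _ _)
      have hc'mem : c' ∈ Set.Icc (c-1) (c+1) := by
        rw [abs_lt] at hd1; constructor <;> linarith [hd1.1, hd1.2]
      have hWc' : W c' ∈ Set.Icc 0 t := hWt c' hc'mem
      rw [Real.dist_eq]
      by_contra hcon
      push_neg at hcon
      have hK' : W c' ∈ {v | v ∈ Set.Icc (0:ℝ) t ∧ ε ≤ |v - ω₀|} := ⟨hWc', hcon⟩
      have h1 : L v₀ - c * v₀ ≤ L (W c') - c * (W c') := hv₀min hK'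
      have h2 : L (W c') - c' * (W c') ≤ L ω₀ - c' * ω₀ := hWmin c' hω₀
      have h3 : (c' - c) * (W c' - ω₀) ≤ |c' - c| * |W c' - ω₀| := by
        rw [← abs_mul]; exact le_abs_self _
      have h4 : |W c' - ω₀| ≤ 1 := by
        rw [abs_le]
        constructor <;> [linarith [hWc'.1, hω₀t.2, ht.2.le]; linarith [hWc'.2, hω₀t.1, ht.2.le]]
      have h5 : |c' - c| * |W c' - ω₀| ≤ (γ/3) * 1 :=
        mul_le_mul hd2.le h4 (abs_nonneg _) (by linarith)
      linarith
    · rw [Metric.eventually_nhds_iff]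
      refine ⟨1, one_pos, fun c' hc'dist => ?_⟩
      rw [Real.dist_eq] at hc'dist
      have hc'mem : c' ∈ Set.Icc (c-1) (c+1) := by
        rw [abs_lt] at hc'dist; constructor <;> linarith [hc'dist.1, hc'dist.2]
      have hWc' := hWt c' hc'mem
      rw [Real.dist_eq]
      by_contra hcon
      push_neg at hcon
      exact hKne ⟨W c', hWc', hcon⟩
  have htend : Tendsto (fun c' => |W c' - ω₀|) (nhdsWithin c {c}ᶜ) (nhds 0) := by
    have h0 : Tendsto (fun c' => |W c' - ω₀|) (nhds c) (nhds |ω₀ - ω₀|) :=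
      (cont.sub tendsto_const_nhds).abs
    simp only [sub_self, abs_zero] at h0
    exact h0.mono_left nhdsWithin_le_nhds
  rw [hasDerivAt_iff_tendsto_slope, tendsto_iff_dist_tendsto_zero]
  apply squeeze_zero' (Filter.Eventually.of_forall fun _ => dist_nonneg) ?_ htend
  filter_upwards [self_mem_nhdsWithin] with c' hc'
  have hc'ne : c' ≠ c := hc'
  have hne : c' - c ≠ 0 := sub_ne_zero.mpr hc'ne
  rw [Real.dist_eq, slope_def_field]
  have heq : (Mfun L c' - Mfun L c) / (c' - c) - -ω₀
      = (Mfun L c' - Mfun L c + (c' - c) * ω₀) / (c' - c) := by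
    field_simp
    ring
  rw [heq, abs_div, div_le_iff₀ (abs_pos.mpr hne)]
  calc |Mfun L c' - Mfun L c + (c' - c) * ω₀| ≤ |c' - c| * |W c' - ω₀| := bound c'
    _ = |W c' - ω₀| * |c' - c| := mul_comm _ _

lemma Hxi_eq {L : ℝ → ℝ} (hcont : ContinuousOn L (Set.Ico 0 1)) (hL0 : L 0 = 0)
    (hLtop : Filter.Tendsto L (nhdsWithin 1 (Set.Iio 1)) Filter.atTop)
    (hconv : StrictConvexOn ℝ (Set.Ico 0 1) L)
    (lam r mu sig x ξ p : ℝ) (hp : p ≠ 0) {ω₀ : ℝ}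
    (hω₀ : ω₀ ∈ Set.Ico (0:ℝ) 1)
    (hmin : IsMinOn (fun ω => L ω - ξ / p * ω) (Set.Ico 0 1) ω₀) :
    Hxi L lam r mu sig x ξ p = -ω₀ / p + ((lam + r) / p - lam + sig ^ 2 - mu) * x := by
  have hM : HasDerivAt (Mfun L) (-ω₀) (ξ / p) := hasDerivAt_Mfun hcont hL0 hLtop hconv hω₀ hmin
  have hinner : HasDerivAt (fun ξ' : ℝ => ξ' / p) (1 / p) ξ := by
    simpa using (hasDerivAt_id ξ).div_const p
  have hcomp : HasDerivAt (fun ξ' => Mfun L (ξ' / p)) (-ω₀ * (1 / p)) ξ := by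
    have := hM.comp ξ hinner; exact this
  have hlin : HasDerivAt (fun ξ' => ((lam + r) / p - lam + sig ^ 2 - mu) * x * ξ')
      (((lam + r) / p - lam + sig ^ 2 - mu) * x) ξ := by
    simpa using (hasDerivAt_id ξ).const_mul (((lam + r) / p - lam + sig ^ 2 - mu) * x)
  have htot : HasDerivAt (fun ξ' => Mfun L (ξ' / p) + ((lam + r) / p - lam + sig ^ 2 - mu) * x * ξ')
      (-ω₀ * (1 / p) + ((lam + r) / p - lam + sig ^ 2 - mu) * x) ξ := hcomp.add hlin
  have hfun : (fun ξ' => Mfun L (ξ' / p) + ((lam + r) / p - lam + sig ^ 2 - mu) * x * ξ')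
      = fun ξ' => Ham L lam r mu sig x ξ' p := rfl
  rw [hfun] at htot
  rw [Hxi, htot.deriv]
  field_simp

lemma hasDerivAt_a_div (a x : ℝ) (hx : x ≠ 0) :
    HasDerivAt (fun y => a / y) (-a / x^2) x := by
  have h := (hasDerivAt_inv hx).const_mul a
  have heq : (fun y : ℝ => a / y) = fun y => a * y⁻¹ := by
    funext y; rw [div_eq_mul_inv]
  rw [heq]
  refine h.congr_deriv ?_
  ring

lemma hasDerivAt_a_div_sq (a x : ℝ) (hx : x ≠ 0) :
    HasDerivAt (fun y => a / y^2) (-(2*a/x^3)) x := by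
  have h := ((hasDerivAt_pow 2 x).inv (pow_ne_zero 2 hx)).const_mul a
  have heq : (fun y : ℝ => a / y^2) = fun y => a * (y^2)⁻¹ := by
    funext y; rw [div_eq_mul_inv]
  rw [heq]
  refine h.congr_deriv ?_
  field_simp
  ring

lemma deriv2_a_div (a x : ℝ) (hx : x ≠ 0) :
    deriv (deriv (fun y => a / y)) x = 2*a/x^3 := by
  have hev : deriv (fun y => a / y) =ᶠ[nhds x] fun y => -a / y^2 := by
    filter_upwards [eventually_ne_nhds hx] with y hy
    rw [(hasDerivAt_a_div a y hy).deriv]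
  rw [hev.deriv_eq]
  have h := (hasDerivAt_a_div_sq (-a) x hx).deriv
  rw [h]; ring

lemma hasDerivAt_V (a B x : ℝ) (hx : x ≠ 0) :
    HasDerivAt (fun y => (1 - a/y)*B) (a / x^2 * B) x := by
  have h := ((hasDerivAt_const x (1:ℝ)).sub (hasDerivAt_a_div a x hx)).mul_const B
  refine h.congr_deriv ?_
  ring

lemma deriv2_V (a B x : ℝ) (hx : x ≠ 0) :
    deriv (deriv (fun y => (1 - a/y)*B)) x = -(2*a/x^3)*B := by
  have hev : deriv (fun y => (1 - a/y)*B) =ᶠ[nhds x] fun y => a / y^2 * B := by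
    filter_upwards [eventually_ne_nhds hx] with y hy
    rw [(hasDerivAt_V a B y hy).deriv]
  rw [hev.deriv_eq]
  exact ((hasDerivAt_a_div_sq a x hx).mul_const B).deriv

lemma partb_arith (r mu lam sig x2 x B q : ℝ) (hB : 0 < B) (hmu : 0 ≤ mu) (hlam : 0 ≤ lam)
    (hrmu : 0 < r - mu) (hx2pos : 0 < x2) (hx2r : 2 ≤ (r - mu) * x2) (hxlt : x2 < x)
    (hq0 : 0 < q) (hq1 : q ≤ x2 / x) :
    0 ≤ -r * ((1 - x2 / x) * B) +
      (-(x2 / x ^ 2 * B / q) + ((lam + r) / q - lam + sig ^ 2 - mu) * x * (x2 / x ^ 2 * B)) +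
      sig ^ 2 * x ^ 2 / 2 * (-(2 * x2 / x ^ 3) * B) := by
  have hxpos : 0 < x := hx2pos.trans hxlt
  have hxne : x ≠ 0 := hxpos.ne'
  have hx2ne : x2 ≠ 0 := hx2pos.ne'
  have hqne : q ≠ 0 := hq0.ne'
  have h1 : x / x2 ≤ 1 / q := by
    rw [div_le_div_iff₀ hx2pos hq0]
    have := (le_div_iff₀ hxpos).1 hq1
    linarith
  have hrx : 2 ≤ (r - mu) * x := by nlinarith [mul_le_mul_of_nonneg_left hxlt.le hrmu.le]
  have h6 : 1 ≤ (lam + r) * x := by nlinarith [mul_nonneg hlam hxpos.le, mul_nonneg hmu hxpos.le]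
  have h2 : 0 ≤ ((lam + r) * x - 1) * (x2 * B / x ^ 2) := by
    apply mul_nonneg (by linarith)
    positivity
  have h3 : (x / x2) * (((lam + r) * x - 1) * (x2 * B / x ^ 2)) ≤
      (1 / q) * (((lam + r) * x - 1) * (x2 * B / x ^ 2)) :=
    mul_le_mul_of_nonneg_right h1 h2
  have heq1 : -r * ((1 - x2 / x) * B) +
      (-(x2 / x ^ 2 * B / q) + ((lam + r) / q - lam + sig ^ 2 - mu) * x * (x2 / x ^ 2 * B)) +
      sig ^ 2 * x ^ 2 / 2 * (-(2 * x2 / x ^ 3) * B) =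
      (1 / q) * (((lam + r) * x - 1) * (x2 * B / x ^ 2)) +
      (-r * (1 - x2 / x) * B - (lam + mu - sig ^ 2) * (x2 * B / x) - sig ^ 2 * x2 * B / x) := by
    field_simp
    ring
  have heq2 : (x / x2) * (((lam + r) * x - 1) * (x2 * B / x ^ 2)) +
      (-r * (1 - x2 / x) * B - (lam + mu - sig ^ 2) * (x2 * B / x) - sig ^ 2 * x2 * B / x) =
      lam * B * (1 - x2 / x) + ((r - mu) * x2 - 1) * (B / x) := by
    field_simp
    ring
  have hA : 0 ≤ lam * B * (1 - x2 / x) := by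
    apply mul_nonneg (mul_nonneg hlam hB.le)
    have : x2 / x < 1 := (div_lt_one hxpos).2 hxlt
    linarith
  have hC : 0 ≤ ((r - mu) * x2 - 1) * (B / x) :=
    mul_nonneg (by linarith) (by positivity)
  linarith

theorem stmt_17
    (r mu lam sig : ℝ) (hmu : 0 ≤ mu) (hr : mu < r) (hlam : 0 ≤ lam) (hsig : 0 ≤ sig)
    (L : ℝ → ℝ)
    (hL : ContDiffOn ℝ 2 L (Set.Ico 0 1))
    (hL0 : L 0 = 0)
    (hL1 : ∀ u ∈ Set.Ico (0:ℝ) 1, 0 < deriv L u)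
    (hL2 : ∀ u ∈ Set.Ico (0:ℝ) 1, 0 < deriv (deriv L) u)
    (hLtop : Filter.Tendsto L (nhdsWithin 1 (Set.Iio 1)) Filter.atTop)
    (xs B th : ℝ) (hxs : 0 < xs) (hB : 0 < B) (hth : th ∈ Set.Ico (0:ℝ) 1)
    (x2 : ℝ) (hx2def : x2 = th * xs + 2 / (r - mu)) (hx2 : x2 < xs) :
    ∀ x ∈ Set.Ioo x2 xs,
      (∀ ξ : ℝ, 0 ≤ ξ →
        (r + lam) * (1 - x2 / x) + Hxi L lam r mu sig x ξ (x2 / x) * deriv (fun y => x2 / y) x +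
          sig ^ 2 * x ^ 2 / 2 * deriv (deriv (fun y => x2 / y)) x ≤ 0) ∧
      (∀ q ∈ Set.Ioc (0:ℝ) (x2 / x),
        0 ≤ -r * ((1 - x2 / x) * B) +
          Ham L lam r mu sig x (deriv (fun y => (1 - x2 / y) * B) x) q +
          sig ^ 2 * x ^ 2 / 2 * deriv (deriv (fun y => (1 - x2 / y) * B)) x) := by
  have hcont : ContinuousOn L (Set.Ico 0 1) := hL.continuousOn
  have hconv : StrictConvexOn ℝ (Set.Ico 0 1) L := by
    apply strictConvexOn_of_deriv2_pos (convex_Ico 0 1) hcont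
    intro u hu
    rw [interior_Ico] at hu
    have := hL2 u (Set.Ioo_subset_Ico_self hu)
    exact this
  have hLnonneg : ∀ ω ∈ Set.Ico (0:ℝ) 1, 0 ≤ L ω := by
    have hmono := strictMonoOn_of_deriv_pos (convex_Ico (0:ℝ) 1) hcont
      (fun u hu => hL1 u (by rw [interior_Ico] at hu; exact Set.Ioo_subset_Ico_self hu))
    intro ω hω
    rcases eq_or_lt_of_le hω.1 with h | h
    · rw [← h, hL0]
    · have := hmono ⟨le_refl 0, one_pos⟩ hω h
      rw [hL0] at this
      exact this.le
  have hrmu : 0 < r - mu := sub_pos.2 hr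
  have hx2pos : 0 < x2 := by
    rw [hx2def]
    have : 0 < 2 / (r - mu) := by positivity
    nlinarith [mul_nonneg hth.1 hxs.le]
  have hx2r : 2 ≤ (r - mu) * x2 := by
    rw [hx2def]
    have h2 : (r - mu) * (2 / (r - mu)) = 2 := by field_simp
    nlinarith [mul_nonneg (mul_nonneg hrmu.le hth.1) hxs.le]
  intro x hx
  have hxpos : 0 < x := hx2pos.trans hx.1
  have hxne : x ≠ 0 := hxpos.ne'
  have hp : 0 < x2 / x := div_pos hx2pos hxpos
  have hp1 : x2 / x < 1 := (div_lt_one hxpos).2 hx.1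
  constructor
  · intro ξ hξ
    obtain ⟨ω₀, hω₀, hmin⟩ := min_exists' hcont hL0 hLtop (ξ / (x2 / x))
    rw [Hxi_eq hcont hL0 hLtop hconv lam r mu sig x ξ (x2 / x) hp.ne' hω₀ hmin,
      (hasDerivAt_a_div x2 x hxne).deriv, deriv2_a_div x2 x hxne]
    have key : (r + lam) * (1 - x2 / x) +
        (-ω₀ / (x2 / x) + ((lam + r) / (x2 / x) - lam + sig ^ 2 - mu) * x) * (-x2 / x ^ 2) +
        sig ^ 2 * x ^ 2 / 2 * (2 * x2 / x ^ 3) = ((mu - r) * x2 + ω₀) / x := by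
      field_simp
      ring
    rw [key]
    apply div_nonpos_of_nonpos_of_nonneg _ hxpos.le
    nlinarith [hω₀.2]
  · intro q hq
    rw [(hasDerivAt_V x2 B x hxne).deriv, deriv2_V x2 B x hxne]
    have hξpos : 0 < x2 / x ^ 2 * B := by positivity
    have hinf : -(x2 / x ^ 2 * B / q) ≤
        sInf ((fun ω => L ω - x2 / x ^ 2 * B / q * ω) '' Set.Ico 0 1) := by
      apply le_csInf ((Set.nonempty_Ico.2 one_pos).image _)
      rintro b ⟨ω, hω, rfl⟩
      have h1 : 0 ≤ L ω := hLnonneg ω hω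
      have h3 : 0 ≤ x2 / x ^ 2 * B / q := div_nonneg hξpos.le hq.1.le
      have h2 : x2 / x ^ 2 * B / q * ω ≤ x2 / x ^ 2 * B / q := by
        nlinarith [hω.1, hω.2]
      show -(x2 / x ^ 2 * B / q) ≤ L ω - x2 / x ^ 2 * B / q * ω
      linarith
    have hHam : -(x2 / x ^ 2 * B / q) + ((lam + r) / q - lam + sig ^ 2 - mu) * x *
        (x2 / x ^ 2 * B) ≤ Ham L lam r mu sig x (x2 / x ^ 2 * B) q := by
      rw [Ham]
      linarith
    have harith := partb_arith r mu lam sig x2 x B q hB hmu hlam hrmu hx2pos hx2r hx.1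
      hq.1 hq.2
    linarith
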